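/- Let i be an agent type and let q ∈ ℝ^X satisfy q_x ≠ b_i for every x ∈ X and q_x ≠ q_y for all distinct x, y ∈ X. Then D_i(q) is a singleton, and D_i is locally constant at q: there exists ε > 0 such that D_i(q') = D_i(q) for every q' ∈ ℝ^X with max_{x∈X} |q'_x − q_x| < ε. -/
import Mathlib


/-- The standard basis vector `e_x` in `ℝ^X`. -/
def basisVec {X : Type*} [DecidableEq X] (x : X) : X → ℝ := fun y => if y = x then 1 else 0

/-- The demand correspondence `D_i(q)`: cheapest most-preferred affordable objects
(as basis vectors), or `{0}` when nothing is affordable. -/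
def Demand {X : Type*} [DecidableEq X] (pref : X → X → Prop) (b : ℝ) (q : X → ℝ) :
    Set (X → ℝ) :=
  {d | (∃ x, q x ≤ b ∧ d = basisVec x ∧
          (∀ y, q y ≤ b → pref x y) ∧
          (∀ y, q y ≤ b → (∀ z, q z ≤ b → pref y z) → q x ≤ q y)) ∨
       ((¬ ∃ x, q x ≤ b) ∧ d = 0)}

/-- Strict part of a preference relation. -/
def strictPref {X : Type*} (pref : X → X → Prop) (x y : X) : Prop :=
  pref x y ∧ ¬ pref y x

/-- Claim 1 of Theorem 3(ii): away from the budget boundary and price ties, the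
demand correspondence is a singleton and locally constant. -/
theorem demand_singleton_locally_constant
    {X : Type*} [Fintype X] [DecidableEq X]
    (pref : X → X → Prop)
    (hcomplete : ∀ x y, pref x y ∨ pref y x)
    (htrans : Transitive pref)
    (bi : ℝ) (hbi : 0 < bi)
    (q : X → ℝ) (hbdry : ∀ x, q x ≠ bi)
    (hties : ∀ x y : X, x ≠ y → q x ≠ q y) :
    (∃ d : X → ℝ, Demand pref bi q = {d}) ∧
    ∃ ε > 0, ∀ q' : X → ℝ, (∀ x, |q' x - q x| < ε) →
      Demand pref bi q' = Demand pref bi q := by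
  classical
  have hrefl : ∀ x, pref x x := fun x => (hcomplete x x).elim id id
  -- existence of a maximum on any nonempty finset
  have hmaxset : ∀ s : Finset X, s.Nonempty → ∃ x ∈ s, ∀ y ∈ s, pref x y := by
    intro s
    induction s using Finset.induction_on with
    | empty => intro hs; exact absurd hs (by simp)
    | @insert a s ha ih =>
      intro _
      rcases s.eq_empty_or_nonempty with rfl | hs'
      · exact ⟨a, by simp, by simp [hrefl]⟩
      · obtain ⟨m, hm, hmx⟩ := ih hs'
        rcases hcomplete m a with h | h
        · refine ⟨m, Finset.mem_insert_of_mem hm, ?_⟩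
          intro y hy
          rcases Finset.mem_insert.1 hy with rfl | hy
          · exact h
          · exact hmx y hy
        · refine ⟨a, Finset.mem_insert_self _ _, ?_⟩
          intro y hy
          rcases Finset.mem_insert.1 hy with rfl | hy
          · exact hrefl _
          · exact htrans h (hmx y hy)
  -- the ε
  set S : Finset ℝ :=
    insert 1 ((Finset.univ.image fun x : X => |q x - bi|) ∪
      ((Finset.univ : Finset (X × X)).filter (fun p => p.1 ≠ p.2)).image
        fun p => |q p.1 - q p.2| / 2) with hS
  have hSne : S.Nonempty := ⟨1, Finset.mem_insert_self _ _⟩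
  set ε := S.min' hSne with hεdef
  have hεpos : 0 < ε := by
    rw [hεdef]
    rw [show (0:ℝ) < S.min' hSne ↔ ∀ b ∈ S, 0 < b from Finset.lt_min'_iff S hSne]
    intro b hb
    simp only [hS, Finset.mem_insert, Finset.mem_union, Finset.mem_image,
      Finset.mem_filter, Finset.mem_univ, true_and] at hb
    rcases hb with rfl | ⟨x, rfl⟩ | ⟨⟨x, y⟩, hxy, rfl⟩
    · norm_num
    · exact abs_pos.2 (sub_ne_zero.2 (hbdry x))
    · have := abs_pos.2 (sub_ne_zero.2 (hties x y hxy))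
      linarith
  have hε₁ : ∀ x, ε ≤ |q x - bi| := by
    intro x
    apply Finset.min'_le
    simp only [hS, Finset.mem_insert, Finset.mem_union, Finset.mem_image, Finset.mem_univ,
      true_and]
    exact Or.inr (Or.inl ⟨x, rfl⟩)
  have hε₂ : ∀ x y : X, x ≠ y → ε ≤ |q x - q y| / 2 := by
    intro x y hxy
    apply Finset.min'_le
    simp only [hS, Finset.mem_insert, Finset.mem_union, Finset.mem_image,
      Finset.mem_filter, Finset.mem_univ, true_and]
    exact Or.inr (Or.inr ⟨(x, y), hxy, rfl⟩)
  -- affordability preserved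
  have haff : ∀ q' : X → ℝ, (∀ x, |q' x - q x| < ε) → ∀ x, (q' x ≤ bi ↔ q x ≤ bi) := by
    intro q' hq' x
    obtain ⟨h1, h2⟩ := abs_lt.1 (hq' x)
    have h3 := hε₁ x
    rcases (hbdry x).lt_or_gt with hx | hx
    · rw [abs_of_neg (by linarith)] at h3
      constructor <;> intro <;> linarith
    · rw [abs_of_pos (by linarith)] at h3
      constructor <;> intro <;> linarith
  -- strict order preserved
  have hord : ∀ q' : X → ℝ, (∀ x, |q' x - q x| < ε) → ∀ x y : X, q x < q y → q' x < q' y := by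
    intro q' hq' x y hxy
    have hne : x ≠ y := fun h => by subst h; exact lt_irrefl _ hxy
    have h3 := hε₂ x y hne
    rw [abs_of_neg (by linarith)] at h3
    obtain ⟨hx1, hx2⟩ := abs_lt.1 (hq' x)
    obtain ⟨hy1, hy2⟩ := abs_lt.1 (hq' y)
    linarith
  -- characterization of the demand set when a cheapest maximum exists
  have hchar : ∀ (p : X → ℝ) (x0 : X), p x0 ≤ bi → (∀ y, p y ≤ bi → pref x0 y) →
      (∀ y, p y ≤ bi → (∀ z, p z ≤ bi → pref y z) → y ≠ x0 → p x0 < p y) →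
      Demand pref bi p = {basisVec x0} := by
    intro p x0 h1 h2 h3
    ext d
    simp only [Demand, Set.mem_setOf_eq, Set.mem_singleton_iff]
    constructor
    · rintro (⟨x, hx, rfl, hxmax, hxcheap⟩ | ⟨hne, rfl⟩)
      · by_cases hx0 : x = x0
        · subst hx0; rfl
        · exfalso
          have h4 := hxcheap x0 h1 h2
          have h5 := h3 x hx hxmax hx0
          linarith
      · exact absurd ⟨x0, h1⟩ hne
    · rintro rfl
      refine Or.inl ⟨x0, h1, rfl, h2, ?_⟩
      intro y hy hymax
      by_cases h : y = x0
      · subst h; exact le_refl _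
      · exact (h3 y hy hymax h).le
  by_cases hA : ∃ x : X, q x ≤ bi
  · -- nonempty affordable set
    set A : Finset X := Finset.univ.filter (fun x => q x ≤ bi) with hAdef
    have hAne : A.Nonempty := by
      obtain ⟨x, hx⟩ := hA
      exact ⟨x, by simp [hAdef, hx]⟩
    obtain ⟨m, hmA, hmmax⟩ := hmaxset A hAne
    have hmA' : q m ≤ bi := by simpa [hAdef] using hmA
    set M : Finset X := Finset.univ.filter (fun x => q x ≤ bi ∧ ∀ y, q y ≤ bi → pref x y)
      with hMdef
    have hMne : M.Nonempty := by
      refine ⟨m, ?_⟩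
      simp only [hMdef, Finset.mem_filter, Finset.mem_univ, true_and]
      exact ⟨hmA', fun y hy => hmmax y (by simp [hAdef, hy])⟩
    obtain ⟨x0, hx0M, hx0min⟩ := M.exists_min_image q hMne
    obtain ⟨hx0aff, hx0max⟩ : q x0 ≤ bi ∧ ∀ y, q y ≤ bi → pref x0 y := by
      simpa [hMdef] using hx0M
    have hx0strict : ∀ y, q y ≤ bi → (∀ z, q z ≤ bi → pref y z) → y ≠ x0 → q x0 < q y := by
      intro y hy hymax hne
      have hyM : y ∈ M := by
        rw [hMdef]
        exact Finset.mem_filter.2 ⟨Finset.mem_univ y, hy, hymax⟩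
      exact lt_of_le_of_ne (hx0min y hyM) (hties x0 y (Ne.symm hne))
    have hq : Demand pref bi q = {basisVec x0} := hchar q x0 hx0aff hx0max hx0strict
    refine ⟨⟨basisVec x0, hq⟩, ε, hεpos, ?_⟩
    intro q' hq'
    rw [hq]
    refine hchar q' x0 ((haff q' hq' x0).2 hx0aff) ?_ ?_
    · intro y hy
      exact hx0max y ((haff q' hq' y).1 hy)
    · intro y hy hymax hne
      have hy' : q y ≤ bi := (haff q' hq' y).1 hy
      have hymax' : ∀ z, q z ≤ bi → pref y z := fun z hz =>
        hymax z ((haff q' hq' z).2 hz)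
      exact hord q' hq' x0 y (hx0strict y hy' hymax' hne)
  · -- empty affordable set
    have hq : Demand pref bi q = {(0 : X → ℝ)} := by
      ext d
      simp only [Demand, Set.mem_setOf_eq, Set.mem_singleton_iff]
      constructor
      · rintro (⟨x, hx, _⟩ | ⟨_, rfl⟩)
        · exact absurd ⟨x, hx⟩ hA
        · rfl
      · rintro rfl; exact Or.inr ⟨hA, rfl⟩
    refine ⟨⟨0, hq⟩, ε, hεpos, ?_⟩
    intro q' hq'
    rw [hq]
    have hA' : ¬ ∃ x : X, q' x ≤ bi := by
      rintro ⟨x, hx⟩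
      exact hA ⟨x, (haff q' hq' x).1 hx⟩
    ext d
    simp only [Demand, Set.mem_setOf_eq, Set.mem_singleton_iff]
    constructor
    · rintro (⟨x, hx, _⟩ | ⟨_, rfl⟩)
      · exact absurd ⟨x, hx⟩ hA'
      · rfl
    · rintro rfl; exact Or.inr ⟨hA', rfl⟩
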